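/- Let n ≥ 2 be an integer and let −1 < i_b ≤ s_b < ∞ and 0 < i ≤ s be real numbers with (n−2)·s < 2(n−1). Then there exist constants c = c(n,i,s,i_b,s_b) > 0 and C = C(n,i,s) > 0 such that the following holds: for every unit vector w ∈ ℝⁿ, every α > −1, every β ∈ [i_b, s_b], such that i ≤ (1+α)/(1+β) ≤ s, and every symmetric matrix H ∈ ℝ^{n×n}, setting A = I + α·w wᵀ and B = I + β·w wᵀ, one has c·|BH|² ≤ ⟨BH,(BH)ᵀ⟩ − (tr(BH))² + C·⟨A,H⟩². -/

import Mathlib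

set_option maxHeartbeats 1000000

open Matrix Finset

private lemma scalar_key (μ ib sb iθ sθ : ℝ) (hμ0 : 0 < μ) (hμ1 : μ ≤ 1)
    (hib : -1 < ib) (hibsb : ib ≤ sb) (hiθ : 0 < iθ) (hθθ : iθ ≤ sθ)
    (hs : (1 - μ) * sθ < 2) :
    ∃ c C : ℝ, 0 < c ∧ 0 < C ∧ ∀ α β t q P S : ℝ,
      -1 < α → ib ≤ β → β ≤ sb → iθ ≤ (1 + α) / (1 + β) → (1 + α) / (1 + β) ≤ sθ →
      q ^ 2 ≤ P → μ * (t - q) ^ 2 ≤ S - 2 * P + q ^ 2 →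
      c * (S + (2 * β + β ^ 2) * P) ≤
        S + 2 * β * P + β ^ 2 * q ^ 2 - (t + β * q) ^ 2 + C * (t + α * q) ^ 2 := by
  set m : ℝ := 1 - μ with hm
  have hm0 : 0 ≤ m := by linarith
  have hms : 0 < 2 - m * sθ := by linarith
  have hsθ0 : 0 < sθ := lt_of_lt_of_le hiθ hθθ
  set κ : ℝ := iθ * (2 - m * sθ) with hκdef
  have hκ : 0 < κ := mul_pos hiθ hms
  set C : ℝ := max (2 / κ) 2 with hCdef
  have hC2 : (2:ℝ) ≤ C := le_max_right _ _
  have hC0 : 0 < C := by linarith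
  have hCκ : 2 ≤ C * κ := by
    have h1 : 2 / κ ≤ C := le_max_left _ _
    calc (2:ℝ) = (2/κ) * κ := by field_simp
    _ ≤ C * κ := by
      have e := mul_nonneg (sub_nonneg.2 h1) hκ.le
      rw [sub_mul] at e; linarith
  set lam : ℝ := 1 / (C * (sθ ^ 2 + 1)) with hlamdef
  have hden : 0 < C * (sθ ^ 2 + 1) := by positivity
  have hlam0 : 0 < lam := by positivity
  set c1 : ℝ := 2 * (1 + ib) / (1 + (1 + sb) ^ 2) with hc1def
  have hc10 : 0 < c1 := by
    apply div_pos (by linarith) (by positivity)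
  set c : ℝ := min c1 lam / 2 with hcdef
  have hc0 : 0 < c := by positivity
  have hclam : c < lam := by
    have := min_le_right c1 lam
    simp only [hcdef]; linarith [hlam0, min_le_right c1 lam]
  have hcc1 : c ≤ c1 := by
    have := min_le_left c1 lam
    simp only [hcdef]; linarith [hc10]
  have hlamhalf : lam ≤ 1/2 := by
    rw [hlamdef]
    rw [div_le_div_iff₀ hden (by norm_num)]
    have e := mul_nonneg hC0.le (sq_nonneg sθ)
    linarith [e, hC2]
  have hc1' : c ≤ 1/2 := le_trans hclam.le hlamhalf
  refine ⟨c, C, hc0, hC0, ?_⟩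
  intro α β t q P S hα hβ1 hβ2 hθ1 hθ2 hqP hk2
  set ρ : ℝ := 1 + β with hρdef
  have hρ0 : 0 < ρ := by simp only [hρdef]; linarith
  set θ : ℝ := (1 + α) / (1 + β) with hθdef
  have hθρ : θ * ρ = 1 + α := by
    simp only [hθdef, hρdef]; field_simp [(show (0:ℝ) < 1 + β by linarith).ne']
  have hθiθ : iθ ≤ θ := hθ1
  have hθsθ : θ ≤ sθ := hθ2
  have hθ0 : 0 < θ := lt_of_lt_of_le hiθ hθiθ
  set τ : ℝ := t - q with hτdef
  set u : ℝ := ρ * q with hudef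
  -- Step A : c * (1 + ρ^2) ≤ 2 * ρ
  have hA : c * (1 + ρ ^ 2) ≤ 2 * ρ := by
    have hρ1 : ρ ≤ 1 + sb := by simp only [hρdef]; linarith
    have h1 : c * (1 + ρ ^ 2) ≤ c1 * (1 + (1 + sb) ^ 2) := by
      have h : ρ ^ 2 ≤ (1 + sb) ^ 2 := pow_le_pow_left₀ hρ0.le hρ1 2
      exact mul_le_mul hcc1 (by linarith) (by positivity) hc10.le
    have h2 : c1 * (1 + (1 + sb) ^ 2) = 2 * (1 + ib) := by
      rw [hc1def]; field_simp
    have h3 : 2 * (1 + ib) ≤ 2 * ρ := by simp only [hρdef]; linarith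
    linarith
  have hF1 : 0 ≤ (2 * ρ - c * (1 + ρ ^ 2)) * (P - q ^ 2) := by
    apply mul_nonneg (by linarith) (by linarith)
  have hF2 : 0 ≤ (1 - c) * ((S - 2 * P + q ^ 2) - μ * τ ^ 2) := by
    apply mul_nonneg (by linarith) (by linarith)
  -- 2x2 quadratic form
  set a : ℝ := C * θ ^ 2 with hadef
  set b : ℝ := C * θ - 1 with hbdef
  set d : ℝ := C - m with hddef
  have hκ2iθ : κ ≤ 2 * iθ := by
    have e := mul_nonneg hiθ.le (mul_nonneg hm0 hsθ0.le)
    rw [hκdef]; linarith [e]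
  have hCiθ : 1 ≤ C * iθ := by
    have e := mul_nonneg hC0.le (sub_nonneg.2 hκ2iθ)
    rw [mul_sub] at e
    linarith [e, hCκ]
  have hCθ : 1 ≤ C * θ := by
    have e := mul_nonneg hC0.le (sub_nonneg.2 hθiθ)
    rw [mul_sub] at e
    linarith [e, hCiθ]
  have hmθ : m * θ ≤ m * sθ := mul_le_mul_of_nonneg_left hθsθ hm0
  have hδ : 2 ≤ C * θ * (2 - m * θ) := by
    have e1 : 0 ≤ (θ - iθ) * (2 - m * θ) := mul_nonneg (by linarith) (by linarith)
    have e2 : 0 ≤ iθ * ((2 - m * θ) - (2 - m * sθ)) := mul_nonneg hiθ.le (by linarith)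
    have h1 : κ ≤ θ * (2 - m * θ) := by rw [hκdef]; linarith [e1, e2]
    have e3 : 0 ≤ C * (θ * (2 - m * θ) - κ) := mul_nonneg hC0.le (by linarith)
    linarith [e3, hCκ]
  have htr : a + d ≤ C * (sθ ^ 2 + 1) := by
    have hsq : θ ^ 2 ≤ sθ ^ 2 := pow_le_pow_left₀ hθ0.le hθsθ 2
    have e : 0 ≤ C * (sθ ^ 2 - θ ^ 2) := mul_nonneg hC0.le (by linarith)
    simp only [hadef, hddef]
    linarith [e, hm0]
  have hcad : c * (a + d) ≤ 1 := by
    have h1 : a + d > 0 := by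
      have ha0 : 0 ≤ a := by rw [hadef]; positivity
      have hd0 : (1:ℝ) ≤ d := by rw [hddef]; linarith
      linarith
    have h2 : c * (a + d) ≤ lam * (C * (sθ ^ 2 + 1)) := by
      apply mul_le_mul hclam.le htr (by linarith) hlam0.le
    have h3 : lam * (C * (sθ ^ 2 + 1)) = 1 := by
      rw [hlamdef]; field_simp
    linarith
  have hac : c < a := by
    have h1 : lam ≤ a := by
      rw [hlamdef, div_le_iff₀ hden, hadef]
      have e1 : (1:ℝ) * 1 ≤ (C * θ) * (C * θ) :=
        mul_le_mul hCθ hCθ (by norm_num) (by linarith)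
      linarith [e1, sq_nonneg (C * θ * sθ)]
    linarith
  have hdc : c ≤ d := by simp only [hddef]; linarith
  have hdet : b ^ 2 ≤ (a - c) * (d - c) := by
    have h1 : a * d - b ^ 2 = C * θ * (2 - m * θ) - 1 := by
      simp only [hadef, hbdef, hddef]; ring
    have h2 : (a - c) * (d - c) - b ^ 2 = (a * d - b ^ 2) - c * (a + d) + c ^ 2 := by ring
    linarith [sq_nonneg c, hcad, hδ, h1, h2]
  have hmain : c * (u ^ 2 + τ ^ 2) ≤ a * u ^ 2 + 2 * b * u * τ + d * τ ^ 2 := by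
    have hkey : (a - c) * ((a - c) * u ^ 2 + 2 * b * u * τ + (d - c) * τ ^ 2)
        = ((a - c) * u + b * τ) ^ 2 + ((a - c) * (d - c) - b ^ 2) * τ ^ 2 := by ring
    have h2 : 0 ≤ ((a - c) * (d - c) - b ^ 2) * τ ^ 2 :=
      mul_nonneg (by linarith) (sq_nonneg τ)
    have h1 : 0 ≤ (a - c) * ((a - c) * u ^ 2 + 2 * b * u * τ + (d - c) * τ ^ 2) := by
      rw [hkey]; positivity
    have h3 : 0 ≤ (a - c) * u ^ 2 + 2 * b * u * τ + (d - c) * τ ^ 2 := by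
      have hpos : (0:ℝ) < a - c := by linarith
      exact le_of_mul_le_mul_left (by rw [mul_zero]; exact h1) hpos
    linarith [h3]
  have hG : c * (u ^ 2 + μ * τ ^ 2) ≤ u ^ 2 + μ * τ ^ 2 - (τ + u) ^ 2 + C * (τ + θ * u) ^ 2 := by
    have hid : u ^ 2 + μ * τ ^ 2 - (τ + u) ^ 2 + C * (τ + θ * u) ^ 2
        = a * u ^ 2 + 2 * b * u * τ + d * τ ^ 2 := by
      simp only [hadef, hbdef, hddef, hm]; ring
    rw [hid]
    have : c * (u ^ 2 + μ * τ ^ 2) ≤ c * (u ^ 2 + τ ^ 2) := by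
      apply mul_le_mul_of_nonneg_left _ hc0.le
      have e : 0 ≤ (1 - μ) * τ ^ 2 := mul_nonneg (by linarith) (sq_nonneg τ)
      linarith [e]
    linarith
  -- rewrite θ * u
  have hθu : θ * u = (1 + α) * q := by rw [hudef, ← hθρ]; ring
  rw [hθu] at hG
  -- final assembly
  have hτq : τ + (1 + α) * q = t + α * q := by rw [hτdef]; ring
  rw [hτq] at hG
  simp only [hudef, hτdef, hρdef] at hF1 hF2 hG
  have hfinal : S + 2 * β * P + β ^ 2 * q ^ 2 - (t + β * q) ^ 2 + C * (t + α * q) ^ 2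
      - c * (S + (2 * β + β ^ 2) * P)
      = (1 - c) * ((S - 2 * P + q ^ 2) - μ * (t - q) ^ 2)
        + (2 * (1 + β) - c * (1 + (1 + β) ^ 2)) * (P - q ^ 2)
        + ((((1 + β) * q) ^ 2 + μ * (t - q) ^ 2 - ((t - q) + (1 + β) * q) ^ 2
            + C * (t + α * q) ^ 2) - c * (((1 + β) * q) ^ 2 + μ * (t - q) ^ 2)) := by
    ring
  linarith [hF1, hF2, hG, hfinal]

/-- The key algebraic Cordes-type inequality for the matrices
`A = I + α·wwᵀ` and `B = I + β·wwᵀ`. -/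
theorem stmt_12 (n : ℕ) (hn : 2 ≤ n) (ib sb iθ sθ : ℝ)
    (hib : -1 < ib) (hibsb : ib ≤ sb)
    (hiθ : 0 < iθ) (hθ : iθ ≤ sθ)
    (hsθ : ((n : ℝ) - 2) * sθ < 2 * ((n : ℝ) - 1)) :
    ∃ c C : ℝ, 0 < c ∧ 0 < C ∧
      ∀ (w : Fin n → ℝ), (∑ k, w k ^ 2) = 1 →
      ∀ α β : ℝ, -1 < α → β ∈ Set.Icc ib sb →
        iθ ≤ (1 + α) / (1 + β) → (1 + α) / (1 + β) ≤ sθ →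
      ∀ H : Matrix (Fin n) (Fin n) ℝ, H.IsSymm →
        c * (∑ k, ∑ l,
              (((1 + β • Matrix.vecMulVec w w) * H) k l) ^ 2) ≤
          (∑ k, ∑ l, ((1 + β • Matrix.vecMulVec w w) * H) k l
              * (((1 + β • Matrix.vecMulVec w w) * H)ᵀ) k l)
            - (Matrix.trace ((1 + β • Matrix.vecMulVec w w) * H)) ^ 2
            + C * (∑ k, ∑ l, (1 + α • Matrix.vecMulVec w w) k l * H k l) ^ 2 := by
  have hn2 : (2:ℝ) ≤ (n:ℝ) := by exact_mod_cast hn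
  have hn1 : (0:ℝ) < (n:ℝ) - 1 := by linarith
  set μ : ℝ := 1 / ((n:ℝ) - 1) with hμdef
  have hμ0 : 0 < μ := by positivity
  have hμ1 : μ ≤ 1 := by
    rw [hμdef, div_le_one hn1]; linarith
  have hs : (1 - μ) * sθ < 2 := by
    have h1 : 1 - μ = ((n:ℝ) - 2) / ((n:ℝ) - 1) := by
      rw [hμdef]; field_simp; ring
    rw [h1, div_mul_eq_mul_div, div_lt_iff₀ hn1]
    linarith
  obtain ⟨c, C, hc, hC, key⟩ := scalar_key μ ib sb iθ sθ hμ0 hμ1 hib hibsb hiθ hθ hs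
  refine ⟨c, C, hc, hC, ?_⟩
  intro w hw α β hα hβ hθ1 hθ2 H hH
  have hsymm : ∀ i j, H i j = H j i := fun i j => Matrix.IsSymm.apply hH j i
  set p : Fin n → ℝ := fun l => ∑ m, w m * H m l with hpdef
  have hp : ∀ l, ∑ k, w k * H k l = p l := fun l => rfl
  have hp' : ∀ k, ∑ l, H k l * w l = p k := by
    intro k
    rw [← hp k]
    exact Finset.sum_congr rfl fun l _ => by rw [hsymm k l]; ring
  set q : ℝ := ∑ k, w k * p k with hqdef
  set t : ℝ := ∑ k, H k k with htdef
  set P : ℝ := ∑ k, p k ^ 2 with hPdef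
  set S : ℝ := ∑ k, ∑ l, H k l ^ 2 with hSdef
  -- contraction lemmas
  have c1 : ∑ k, ∑ l, H k l * (w k * p l) = P := by
    rw [Finset.sum_comm, hPdef]
    refine Finset.sum_congr rfl fun l _ => ?_
    calc ∑ k, H k l * (w k * p l) = (∑ k, w k * H k l) * p l := by
          rw [Finset.sum_mul]; exact Finset.sum_congr rfl fun k _ => by ring
      _ = p l ^ 2 := by rw [hp l]; ring
  have c2 : ∑ k, ∑ l, H k l * (p k * w l) = P := by
    rw [hPdef]
    refine Finset.sum_congr rfl fun k _ => ?_
    calc ∑ l, H k l * (p k * w l) = (∑ l, H k l * w l) * p k := by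
          rw [Finset.sum_mul]; exact Finset.sum_congr rfl fun l _ => by ring
      _ = p k ^ 2 := by rw [hp' k]; ring
  have c3 : ∑ k, ∑ l, H k l * (w k * w l) = q := by
    rw [hqdef]
    refine Finset.sum_congr rfl fun k _ => ?_
    calc ∑ l, H k l * (w k * w l) = w k * (∑ l, H k l * w l) := by
          rw [Finset.mul_sum]; exact Finset.sum_congr rfl fun l _ => by ring
      _ = w k * p k := by rw [hp' k]
  have sep : ∀ f g : Fin n → ℝ, ∑ k, ∑ l, f k * g l = (∑ k, f k) * (∑ l, g l) := by
    intro f g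
    rw [Finset.sum_mul_sum]
  -- entry formula
  have hM : ∀ k l, ((1 + β • Matrix.vecMulVec w w) * H) k l = H k l + β * (w k * p l) := by
    intro k l
    rw [Matrix.add_mul, Matrix.one_mul, Matrix.add_apply, Matrix.smul_mul, Matrix.smul_apply,
      Matrix.mul_apply]
    rw [smul_eq_mul, hpdef]
    simp only [Matrix.vecMulVec_apply]
    simp only [Finset.mul_sum, mul_assoc]
  have hA : ∀ k l, (1 + α • Matrix.vecMulVec w w) k l
      = (if k = l then (1:ℝ) else 0) + α * (w k * w l) := by
    intro k l
    rw [Matrix.add_apply, Matrix.one_apply, Matrix.smul_apply, Matrix.vecMulVec_apply,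
      smul_eq_mul]
  -- aggregate identities
  have e1 : ∑ k, ∑ l, (H k l + β * (w k * p l)) ^ 2 = S + (2 * β + β ^ 2) * P := by
    have expand : ∀ k l : Fin n, (H k l + β * (w k * p l)) ^ 2
        = H k l ^ 2 + 2 * β * (H k l * (w k * p l)) + β ^ 2 * (w k ^ 2 * p l ^ 2) := by
      intro k l; ring
    simp only [expand, Finset.sum_add_distrib, ← Finset.mul_sum, ← Finset.sum_mul]
    rw [c1, hw, ← hSdef, ← hPdef]
    ring
  have e2 : ∑ k, ∑ l, (H k l + β * (w k * p l)) * (H l k + β * (w l * p k))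
      = S + 2 * β * P + β ^ 2 * q ^ 2 := by
    have expand : ∀ k l : Fin n, (H k l + β * (w k * p l)) * (H l k + β * (w l * p k))
        = H k l * H l k + β * (H k l * (p k * w l)) + β * (H l k * (w k * p l))
          + β ^ 2 * ((w k * p k) * (w l * p l)) := by
      intro k l; ring
    simp only [expand, Finset.sum_add_distrib, ← Finset.mul_sum, ← Finset.sum_mul]
    have eS : ∑ k, ∑ l, H k l * H l k = S := by
      rw [hSdef]
      exact Finset.sum_congr rfl fun k _ => Finset.sum_congr rfl fun l _ => by
        rw [hsymm l k]; ring
    have eswap : ∑ k, ∑ l, H l k * (w k * p l) = P := by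
      rw [Finset.sum_comm]
      calc ∑ l, ∑ k, H l k * (w k * p l) = ∑ l, ∑ k, H l k * (p l * w k) :=
            Finset.sum_congr rfl fun l _ => Finset.sum_congr rfl fun k _ => by ring
        _ = P := c2
    rw [eS, eswap, c2, ← hqdef]
    ring
  have etr : Matrix.trace ((1 + β • Matrix.vecMulVec w w) * H) = t + β * q := by
    rw [Matrix.trace]
    simp only [Matrix.diag_apply, hM]
    rw [Finset.sum_add_distrib, ← Finset.mul_sum, ← htdef, ← hqdef]
  have eA : ∑ k, ∑ l, (1 + α • Matrix.vecMulVec w w) k l * H k l = t + α * q := by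
    simp only [hA]
    have expand : ∀ k l : Fin n, ((if k = l then (1:ℝ) else 0) + α * (w k * w l)) * H k l
        = (if k = l then H k l else 0) + α * (H k l * (w k * w l)) := by
      intro k l
      by_cases h : k = l <;> simp [h] <;> ring
    simp only [expand, Finset.sum_add_distrib, ← Finset.mul_sum]
    rw [c3]
    have : ∑ k, ∑ l, (if k = l then H k l else 0) = t := by
      rw [htdef]
      exact Finset.sum_congr rfl fun k _ => by simp
    rw [this]
  -- the K matrix
  set K : Fin n → Fin n → ℝ :=
    fun k l => H k l - w k * p l - p k * w l + q * (w k * w l) with hKdef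
  set G : Fin n → Fin n → ℝ :=
    fun k l => (if k = l then (1:ℝ) else 0) - w k * w l with hGdef
  have sepq : ∑ k, w k * p k = q := rfl
  have eK : ∑ k, ∑ l, K k l ^ 2 = S - 2 * P + q ^ 2 := by
    have expand : ∀ k l : Fin n, K k l ^ 2
        = H k l ^ 2 - 2 * (H k l * (w k * p l)) - 2 * (H k l * (p k * w l))
          + 2 * q * (H k l * (w k * w l))
          + (w k ^ 2 * p l ^ 2) + (p k ^ 2 * w l ^ 2) + 2 * ((w k * p k) * (w l * p l))
          - 2 * q * ((w k * p k) * (w l ^ 2)) - 2 * q * ((w k ^ 2) * (w l * p l))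
          + q ^ 2 * (w k ^ 2 * w l ^ 2) := by
      intro k l; rw [hKdef]; ring
    simp only [expand, Finset.sum_add_distrib, Finset.sum_sub_distrib,
      ← Finset.mul_sum, ← Finset.sum_mul]
    rw [c1, c2, c3, hw, sepq, ← hSdef, ← hPdef]
    ring
  have eKG : ∑ k, ∑ l, K k l * G k l = t - q := by
    have expand : ∀ k l : Fin n, K k l * G k l
        = ((if k = l then K k l else 0)
            - (H k l * (w k * w l) - (w k ^ 2) * (w l * p l) - (w k * p k) * (w l ^ 2)
              + q * (w k ^ 2 * w l ^ 2))) := by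
      intro k l
      by_cases h : k = l
      · subst h; rw [hGdef, hKdef]; simp; ring
      · rw [hGdef, hKdef]; simp [h]; ring
    simp only [expand, Finset.sum_sub_distrib, Finset.sum_add_distrib,
      ← Finset.mul_sum, ← Finset.sum_mul]
    rw [c3, hw, sepq]
    have diag : ∑ k, ∑ l, (if k = l then K k l else 0) = t - q := by
      have : ∀ k : Fin n, ∑ l, (if k = l then K k l else 0) = K k k := by
        intro k; simp
      simp only [this]
      rw [hKdef]
      simp only []
      have : ∀ k : Fin n, H k k - w k * p k - p k * w k + q * (w k * w k)
          = H k k - 2 * (w k * p k) + q * (w k ^ 2) := by intro k; ring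
      calc ∑ k, (H k k - w k * p k - p k * w k + q * (w k * w k))
          = ∑ k, (H k k - 2 * (w k * p k) + q * (w k ^ 2)) :=
            Finset.sum_congr rfl fun k _ => by ring
        _ = t - 2 * q + q * 1 := by
            simp only [Finset.sum_add_distrib, Finset.sum_sub_distrib,
              ← Finset.mul_sum, ← Finset.sum_mul]
            rw [hw, sepq, ← htdef]
        _ = t - q := by ring
    rw [diag]
    ring
  have eG : ∑ k, ∑ l, G k l ^ 2 = (n : ℝ) - 1 := by
    have expand : ∀ k l : Fin n, G k l ^ 2
        = (if k = l then (1:ℝ) else 0) - 2 * (if k = l then w k * w l else 0)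
          + w k ^ 2 * w l ^ 2 := by
      intro k l
      by_cases h : k = l
      · subst h; rw [hGdef]; simp; ring
      · rw [hGdef]; simp [h]; ring
    simp only [expand, Finset.sum_add_distrib, Finset.sum_sub_distrib,
      ← Finset.mul_sum, ← Finset.sum_mul]
    rw [hw]
    have d1 : ∑ k : Fin n, ∑ l, (if k = l then (1:ℝ) else 0) = n := by simp
    have d2 : ∑ k : Fin n, ∑ l, (if k = l then w k * w l else 0) = 1 := by
      have : ∀ k : Fin n, ∑ l, (if k = l then w k * w l else 0) = w k ^ 2 := by
        intro k; simp; ring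
      simp only [this, hw]
    rw [d1, d2]
    ring
  have cs : (∑ k, ∑ l, K k l * G k l) ^ 2
      ≤ (∑ k, ∑ l, K k l ^ 2) * (∑ k, ∑ l, G k l ^ 2) := by
    have h := Finset.sum_mul_sq_le_sq_mul_sq Finset.univ
      (fun x : Fin n × Fin n => K x.1 x.2) (fun x : Fin n × Fin n => G x.1 x.2)
    simpa [Fintype.sum_prod_type] using h
  have hk2 : (t - q) ^ 2 ≤ ((n:ℝ) - 1) * (S - 2 * P + q ^ 2) := by
    rw [← eK, ← eKG]
    calc (∑ k, ∑ l, K k l * G k l) ^ 2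
        ≤ (∑ k, ∑ l, K k l ^ 2) * (∑ k, ∑ l, G k l ^ 2) := cs
      _ = ((n:ℝ) - 1) * (∑ k, ∑ l, K k l ^ 2) := by rw [eG]; ring
  have hqP : q ^ 2 ≤ P := by
    have h := Finset.sum_mul_sq_le_sq_mul_sq Finset.univ w p
    rw [hw, one_mul, ← hPdef] at h
    rw [hqdef]
    exact h
  -- rewrite the goal
  have goal1 : (∑ k, ∑ l, (((1 + β • Matrix.vecMulVec w w) * H) k l) ^ 2)
      = S + (2 * β + β ^ 2) * P := by
    rw [← e1]
    exact Finset.sum_congr rfl fun k _ => Finset.sum_congr rfl fun l _ => by rw [hM k l]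
  have goal2 : (∑ k, ∑ l, ((1 + β • Matrix.vecMulVec w w) * H) k l
        * (((1 + β • Matrix.vecMulVec w w) * H)ᵀ) k l)
      = S + 2 * β * P + β ^ 2 * q ^ 2 := by
    rw [← e2]
    exact Finset.sum_congr rfl fun k _ => Finset.sum_congr rfl fun l _ => by
      rw [Matrix.transpose_apply, hM k l, hM l k]
  have goal3 : (∑ k, ∑ l, (1 + α • Matrix.vecMulVec w w) k l * H k l) = t + α * q := eA
  rw [goal1, goal2, goal3, etr]
  have hμk2 : μ * (t - q) ^ 2 ≤ S - 2 * P + q ^ 2 := by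
    rw [hμdef, div_mul_eq_mul_div, one_mul, div_le_iff₀ hn1]
    linarith [hk2]
  exact key α β t q P S hα hβ.1 hβ.2 hθ1 hθ2 hqP hμk2
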